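/- Two pairs (d_1,v_1), (d_2,v_2) ∈ ℝ_+^n × ℝ^{2n} lie in the same orbit of the (S_n ⋉_φ 𝕋^n)-action Γ if and only if there exists σ ∈ S_n such that d_{2,i} = d_{1,σ(i)} and v_{2,i}² + v_{2,n+i}² = v_{1,σ(i)}² + v_{1,n+σ(i)}² for all i = 1,…,n. -/

import Mathlib

noncomputable section
open Matrix

/-- Block rotation: rotate the plane spanned by the `i`-th and `(n+i)`-th coordinates
of `v` by the angle `θ i`. -/
def rotV {n : ℕ} (θ : Fin n → Real.Angle) (v : Fin n ⊕ Fin n → ℝ) :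
    Fin n ⊕ Fin n → ℝ :=
  Sum.elim (fun i => (θ i).cos * v (Sum.inl i) - (θ i).sin * v (Sum.inr i))
           (fun i => (θ i).sin * v (Sum.inl i) + (θ i).cos * v (Sum.inr i))

/-- Block permutation `P = diag(P_σ, P_σ)` acting on `v`, `(P_σ x)_i = x_{σ⁻¹ i}`. -/
def permV {n : ℕ} (σ : Equiv.Perm (Fin n)) (v : Fin n ⊕ Fin n → ℝ) :
    Fin n ⊕ Fin n → ℝ :=
  Sum.elim (fun i => v (Sum.inl (σ⁻¹ i))) (fun i => v (Sum.inr (σ⁻¹ i)))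

/-- The map `Γ_{(σ,θ)}(d, v) = (P_σ d, R_θ P v)`. -/
def Gamma {n : ℕ} (σ : Equiv.Perm (Fin n)) (θ : Fin n → Real.Angle)
    (p : (Fin n → ℝ) × (Fin n ⊕ Fin n → ℝ)) :
    (Fin n → ℝ) × (Fin n ⊕ Fin n → ℝ) :=
  (p.1 ∘ ⇑σ⁻¹, rotV θ (permV σ p.2))

/-- Two pairs `(d₁,v₁)` and `(d₂,v₂)` in `ℝ₊ⁿ × ℝ^{2n}` lie in the same orbit of the
`(S_n ⋉ 𝕋ⁿ)`-action iff some permutation matches the `d`'s and the plane radii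
`vₗ² + v_{n+l}²`. -/
theorem Gamma_orbit_iff {n : ℕ}
    (d₁ d₂ : Fin n → ℝ) (hd₁ : ∀ i, 0 < d₁ i) (hd₂ : ∀ i, 0 < d₂ i)
    (v₁ v₂ : Fin n ⊕ Fin n → ℝ) :
    (∃ (σ : Equiv.Perm (Fin n)) (θ : Fin n → Real.Angle),
        Gamma σ θ (d₁, v₁) = (d₂, v₂)) ↔
      ∃ σ : Equiv.Perm (Fin n),
        (∀ i, d₂ i = d₁ (σ i)) ∧
        ∀ i, v₂ (Sum.inl i) ^ 2 + v₂ (Sum.inr i) ^ 2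
            = v₁ (Sum.inl (σ i)) ^ 2 + v₁ (Sum.inr (σ i)) ^ 2 := by
  constructor
  · rintro ⟨σ, θ, h⟩
    simp only [Gamma, Prod.mk.injEq] at h
    refine ⟨σ⁻¹, fun i => by rw [← h.1]; rfl, fun i => ?_⟩
    have h1 := congrFun h.2 (Sum.inl i)
    have h2 := congrFun h.2 (Sum.inr i)
    simp only [rotV, permV, Sum.elim_inl, Sum.elim_inr] at h1 h2
    have hc := Real.Angle.cos_sq_add_sin_sq (θ i)
    rw [← h1, ← h2]
    linear_combination (v₁ (Sum.inl (σ⁻¹ i)) ^ 2 + v₁ (Sum.inr (σ⁻¹ i)) ^ 2) * hc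
  · rintro ⟨τ, hd, hv⟩
    set a : Fin n → ℂ := fun i => ⟨v₁ (Sum.inl (τ i)), v₁ (Sum.inr (τ i))⟩ with ha
    set b : Fin n → ℂ := fun i => ⟨v₂ (Sum.inl i), v₂ (Sum.inr i)⟩ with hb
    have hnorm : ∀ i, Complex.normSq (b i) = Complex.normSq (a i) := by
      intro i
      simp only [Complex.normSq_apply, ha, hb, ← sq]
      exact hv i
    have hab : ∀ i, ∃ θ : ℝ, b i = Complex.exp (θ * Complex.I) * a i := by
      intro i
      by_cases h0 : a i = 0
      · refine ⟨0, ?_⟩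
        have : Complex.normSq (b i) = 0 := by rw [hnorm i, h0, map_zero]
        rw [Complex.normSq_eq_zero] at this
        simp [this, h0]
      · refine ⟨(b i / a i).arg, ?_⟩
        have habs : ‖b i / a i‖ = 1 := by
          rw [norm_div]
          have : ‖b i‖ = ‖a i‖ := by
            simp only [Complex.norm_def, hnorm i]
          rw [this, div_self (by simpa using h0)]
        have := Complex.norm_mul_exp_arg_mul_I (b i / a i)
        rw [habs] at this
        rw [Complex.ofReal_one, one_mul] at this
        rw [this, div_mul_cancel₀ _ h0]
    choose θ hθ using hab
    refine ⟨τ⁻¹, fun i => (θ i : Real.Angle), ?_⟩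
    have hre : ∀ i, Real.cos (θ i) * v₁ (Sum.inl (τ i)) - Real.sin (θ i) * v₁ (Sum.inr (τ i))
        = v₂ (Sum.inl i) := by
      intro i
      have := congrArg Complex.re (hθ i)
      simpa [Complex.mul_re, Complex.exp_ofReal_mul_I_re, Complex.exp_ofReal_mul_I_im,
        ha, hb] using this.symm
    have him : ∀ i, Real.sin (θ i) * v₁ (Sum.inl (τ i)) + Real.cos (θ i) * v₁ (Sum.inr (τ i))
        = v₂ (Sum.inr i) := by
      intro i
      have := congrArg Complex.im (hθ i)
      simpa [Complex.mul_im, Complex.exp_ofReal_mul_I_re, Complex.exp_ofReal_mul_I_im,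
        ha, hb, add_comm] using this.symm
    simp only [Gamma, Prod.mk.injEq]
    constructor
    · funext i
      simp only [Function.comp_apply, inv_inv]
      exact (hd i).symm
    · funext x
      cases x with
      | inl i =>
        simp only [rotV, permV, Sum.elim_inl, inv_inv, Real.Angle.cos_coe, Real.Angle.sin_coe]
        exact hre i
      | inr i =>
        simp only [rotV, permV, Sum.elim_inr, inv_inv, Real.Angle.cos_coe, Real.Angle.sin_coe]
        exact him i
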